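/- The function φ_← is complex-differentiable on the open set B(1,1)∖(−∞,1]. -/

import Mathlib

open Complex Metric MeasureTheory intervalIntegral Set
open scoped Interval

/-- `φ_←(z) = 2(z−1)·∫_0^1 (t(z−1))^{1/2}·(1+t(z−1))^{−1/2} dt`, the integral of
`2(s−1)^{1/2} s^{−1/2}` over the straight segment from `1` to `z` (principal powers). -/
noncomputable def phiLeft (z : ℂ) : ℂ :=
  2 * (z - 1) *
    ∫ t in (0:ℝ)..1, ((t : ℂ) * (z - 1)) ^ ((1 : ℂ)/2) * (1 + (t : ℂ) * (z - 1)) ^ (-((1 : ℂ)/2))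

lemma sub_one_mem_slit {z : ℂ} (hz : z ∈ ball (1 : ℂ) 1 \ (Complex.ofReal '' Set.Iic 1)) :
    z - 1 ∈ slitPlane := by
  rw [Complex.mem_slitPlane_iff]
  by_contra h
  push_neg at h
  obtain ⟨h1, h2⟩ := h
  simp only [Complex.sub_re, Complex.sub_im, Complex.one_re, Complex.one_im, sub_zero] at h1 h2
  exact hz.2 ⟨z.re, by simpa using by linarith, by apply Complex.ext <;> simp [h2]⟩

lemma smul_mem_slit {t : ℝ} (ht : 0 < t) {w : ℂ} (hw : w ∈ slitPlane) :
    (t : ℂ) * w ∈ slitPlane := by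
  rw [Complex.mem_slitPlane_iff] at hw ⊢
  rcases hw with h | h
  · exact Or.inl (by simp [Complex.mul_re]; positivity)
  · exact Or.inr (by simp [Complex.mul_im]; exact ⟨ht.ne', h⟩)

/-- `φ_←` is complex-differentiable on `B(1,1)∖(−∞,1]`. -/
theorem stmt_17 :
    DifferentiableOn ℂ phiLeft (ball (1 : ℂ) 1 \ (Complex.ofReal '' Set.Iic 1)) := by
  intro z₀ hz₀
  have hSopen : IsOpen (ball (1 : ℂ) 1 \ (Complex.ofReal '' Set.Iic 1)) := by
    refine isOpen_ball.sdiff ?_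
    exact (Complex.isometry_ofReal.isClosedEmbedding.isClosed_iff_image_isClosed.mp
      isClosed_Iic)
  suffices h : DifferentiableAt ℂ phiLeft z₀ from h.differentiableWithinAt
  -- constants
  have hw₀slit : z₀ - 1 ∈ slitPlane := sub_one_mem_slit hz₀
  have hr₀ : 0 < ‖z₀ - 1‖ :=
    norm_pos_iff.mpr (Complex.slitPlane_ne_zero hw₀slit)
  have hδ : 0 < z₀.re := by
    have h1 := Complex.abs_re_le_norm (z₀ - 1)
    have h2 : ‖z₀ - 1‖ < 1 := by simpa [Complex.dist_eq] using hz₀.1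
    simp only [Complex.sub_re, Complex.one_re] at h1
    have := abs_le.mp h1
    linarith [this.1]
  obtain ⟨ε₁, hε₁pos, hε₁⟩ := Metric.isOpen_iff.mp hSopen z₀ hz₀
  set r : ℝ := ‖z₀ - 1‖ / 2 with hr_def
  set R : ℝ := 2 * ‖z₀ - 1‖ with hR_def
  set c : ℝ := min 1 (z₀.re / 2) with hc_def
  have hrpos : 0 < r := by positivity
  have hRpos : 0 < R := by positivity
  have hcpos : 0 < c := by simp [hc_def]; positivity
  set ε : ℝ := min ε₁ (min r (z₀.re / 2)) with hε_def
  have hεpos : 0 < ε := lt_min hε₁pos (lt_min hrpos (by positivity))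
  -- basic estimates on the ball
  have hball : ∀ x ∈ ball z₀ ε,
      x ∈ ball (1 : ℂ) 1 \ (Complex.ofReal '' Set.Iic 1) ∧
      r ≤ ‖x - 1‖ ∧ ‖x - 1‖ ≤ R ∧ z₀.re / 2 ≤ x.re := by
    intro x hx
    have hd : ‖x - z₀‖ < ε := by simpa [Complex.dist_eq] using hx
    have hε_r : ε ≤ r := le_trans (min_le_right _ _) (min_le_left _ _)
    have hε_re : ε ≤ z₀.re / 2 := le_trans (min_le_right _ _) (min_le_right _ _)
    have hx1 : x ∈ ball z₀ ε₁ := mem_ball.mpr (lt_of_lt_of_le (mem_ball.mp hx) (min_le_left _ _))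
    refine ⟨hε₁ hx1, ?_, ?_, ?_⟩
    · have h3 : ‖z₀ - 1‖ - ‖x - 1‖ ≤ ‖(z₀ - 1) - (x - 1)‖ := norm_sub_norm_le _ _
      have heq : (z₀ - 1) - (x - 1) = -(x - z₀) := by ring
      rw [heq] at h3
      simp only [norm_neg] at h3
      rw [hr_def]; linarith
    · have h3 : ‖x - 1‖ - ‖z₀ - 1‖ ≤ ‖(x - 1) - (z₀ - 1)‖ := norm_sub_norm_le _ _
      have heq : (x - 1) - (z₀ - 1) = x - z₀ := by ring
      rw [heq] at h3
      rw [hR_def]; linarith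
    · have h1 := Complex.abs_re_le_norm (x - z₀)
      simp only [Complex.sub_re] at h1
      have := abs_le.mp h1
      linarith [this.1]
  -- real part lower bound for 1 + t(x-1)
  have hre_bound : ∀ x ∈ ball z₀ ε, ∀ t ∈ Set.Ioc (0:ℝ) 1,
      c ≤ (1 + (t : ℂ) * (x - 1)).re ∧ c ≤ ‖1 + (t : ℂ) * (x - 1)‖ := by
    intro x hx t ht
    have hx' := (hball x hx).2.2.2
    have hre : (1 + (t : ℂ) * (x - 1)).re = 1 - t + t * x.re := by
      simp [Complex.add_re, Complex.mul_re, Complex.sub_re, Complex.sub_im]; ring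
    have hc1 : c ≤ 1 := min_le_left _ _
    have hc2 : c ≤ z₀.re / 2 := min_le_right _ _
    have h1 : c ≤ (1 + (t : ℂ) * (x - 1)).re := by
      rw [hre]
      nlinarith [ht.1, ht.2, mul_nonneg (le_of_lt ht.1) (by linarith : (0:ℝ) ≤ x.re - c)]
    exact ⟨h1, le_trans h1 (Complex.re_le_norm _)⟩
  -- slit plane facts
  have hslit : ∀ x ∈ ball z₀ ε, ∀ t ∈ Set.Ioc (0:ℝ) 1,
      (t : ℂ) * (x - 1) ∈ slitPlane ∧ (1 + (t : ℂ) * (x - 1)) ∈ slitPlane := by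
    intro x hx t ht
    refine ⟨smul_mem_slit ht.1 (sub_one_mem_slit (hball x hx).1), ?_⟩
    rw [Complex.mem_slitPlane_iff]
    exact Or.inl (lt_of_lt_of_le hcpos (hre_bound x hx t ht).1)
  have hIoc : Ι (0:ℝ) 1 = Set.Ioc (0:ℝ) 1 := uIoc_of_le (by norm_num)
  -- the derivative of the integrand
  set F' : ℂ → ℝ → ℂ := fun x t =>
    ((1:ℂ)/2 * ((t:ℂ) * (x - 1)) ^ ((1:ℂ)/2 - 1) * (t:ℂ)) *
        (1 + (t:ℂ) * (x - 1)) ^ (-((1:ℂ)/2)) +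
      ((t:ℂ) * (x - 1)) ^ ((1:ℂ)/2) *
        (-((1:ℂ)/2) * (1 + (t:ℂ) * (x - 1)) ^ (-((1:ℂ)/2) - 1) * (t:ℂ)) with hF'_def
  -- measurability of the integrand
  have hmeas : ∀ x ∈ ball z₀ ε,
      AEStronglyMeasurable
        (fun t : ℝ => ((t:ℂ) * (x - 1)) ^ ((1:ℂ)/2) * (1 + (t:ℂ) * (x - 1)) ^ (-((1:ℂ)/2)))
        (volume.restrict (Ι (0:ℝ) 1)) := by
    intro x hx
    rw [hIoc]
    apply ContinuousOn.aestronglyMeasurable _ measurableSet_Ioc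
    intro t ht
    have hbase : ContinuousAt (fun t : ℝ => (t:ℂ) * (x - 1)) t := by fun_prop
    have hbase' : ContinuousAt (fun t : ℝ => 1 + (t:ℂ) * (x - 1)) t := by fun_prop
    exact ((hbase.cpow continuousAt_const (hslit x hx t ht).1).mul
      (hbase'.cpow continuousAt_const (hslit x hx t ht).2)).continuousWithinAt
  -- norm computations
  have hnorm : ∀ x ∈ ball z₀ ε, ∀ t ∈ Set.Ioc (0:ℝ) 1, ∀ a : ℝ,
      ‖((t:ℂ) * (x - 1)) ^ ((a:ℝ) : ℂ)‖ = (t * ‖x - 1‖) ^ a := by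
    intro x hx t ht a
    rw [Complex.norm_cpow_real]
    congr 1
    rw [norm_mul, Complex.norm_real, Real.norm_eq_abs, abs_of_pos ht.1]
  have key : HasDerivAt
      (fun z => ∫ t in (0:ℝ)..1,
        ((t:ℂ) * (z - 1)) ^ ((1:ℂ)/2) * (1 + (t:ℂ) * (z - 1)) ^ (-((1:ℂ)/2)))
      (∫ t in (0:ℝ)..1, F' z₀ t) z₀ := by
    set K : ℝ := 1/2 * 1 * r ^ (-(1/2) : ℝ) * c ^ (-(1/2) : ℝ) +
      R ^ ((1/2) : ℝ) * (1/2 * c ^ (-(3/2) : ℝ) * 1) with hK_def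
    have hz₀ball : z₀ ∈ ball z₀ ε := mem_ball_self hεpos
    refine (intervalIntegral.hasDerivAt_integral_of_dominated_loc_of_deriv_le (bound := fun _ => K)
      (ball_mem_nhds z₀ hεpos) ?_ ?_ ?_ ?_ ?_ ?_).2
    · filter_upwards [ball_mem_nhds z₀ hεpos] with x hx using hmeas x hx
    · -- integrability at z₀
      apply (_root_.intervalIntegrable_const
        (c := ‖z₀ - 1‖ ^ ((1/2):ℝ) * c ^ (-(1/2):ℝ))).mono_fun (hmeas z₀ hz₀ball)
      refine (ae_restrict_iff' measurableSet_uIoc).mpr (Filter.Eventually.of_forall ?_)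
      intro t htI
      rw [hIoc] at htI
      have h12 : ((1:ℂ)/2) = (((1/2 : ℝ)) : ℂ) := by norm_num
      simp only [norm_mul]
      rw [h12, ← Complex.ofReal_neg, hnorm z₀ hz₀ball t htI, Complex.norm_cpow_real]
      have hb := (hre_bound z₀ hz₀ball t htI).2
      have e1 : (t * ‖z₀ - 1‖) ^ ((1/2):ℝ) ≤ ‖z₀ - 1‖ ^ ((1/2):ℝ) :=
        Real.rpow_le_rpow (mul_nonneg htI.1.le (norm_nonneg _))
          (by nlinarith [htI.1, htI.2, norm_nonneg (z₀ - 1)]) (by norm_num)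
      have e2 : ‖1 + (t:ℂ) * (z₀ - 1)‖ ^ (-(1/2):ℝ) ≤ c ^ (-(1/2):ℝ) :=
        Real.rpow_le_rpow_of_nonpos hcpos hb (by norm_num)
      calc (t * ‖z₀ - 1‖) ^ ((1/2):ℝ) *
            ‖1 + (t:ℂ) * (z₀ - 1)‖ ^ (-(1/2):ℝ)
          ≤ ‖z₀ - 1‖ ^ ((1/2):ℝ) * c ^ (-(1/2):ℝ) :=
            mul_le_mul e1 e2 (Real.rpow_nonneg (norm_nonneg _) _)
              (Real.rpow_nonneg (norm_nonneg _) _)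
        _ ≤ ‖‖z₀ - 1‖ ^ ((1/2):ℝ)‖ * ‖c ^ (-(1/2):ℝ)‖ := by
            rw [Real.norm_eq_abs, Real.norm_eq_abs]
            exact mul_le_mul (le_abs_self _) (le_abs_self _) (by positivity) (abs_nonneg _)
    · -- measurability of F' z₀
      rw [hIoc]
      apply ContinuousOn.aestronglyMeasurable _ measurableSet_Ioc
      intro t ht
      have h1 := (hslit z₀ hz₀ball t ht).1
      have h2 := (hslit z₀ hz₀ball t ht).2
      have hb1 : ContinuousAt (fun t : ℝ => (t:ℂ) * (z₀ - 1)) t := by fun_prop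
      have hb2 : ContinuousAt (fun t : ℝ => 1 + (t:ℂ) * (z₀ - 1)) t := by fun_prop
      have hc1 : ContinuousAt (fun t : ℝ => ((t:ℂ) * (z₀ - 1)) ^ ((1:ℂ)/2 - 1)) t :=
        hb1.cpow continuousAt_const h1
      have hc2 : ContinuousAt (fun t : ℝ => ((t:ℂ) * (z₀ - 1)) ^ ((1:ℂ)/2)) t :=
        hb1.cpow continuousAt_const h1
      have hc3 : ContinuousAt (fun t : ℝ => (1 + (t:ℂ) * (z₀ - 1)) ^ (-((1:ℂ)/2))) t :=
        hb2.cpow continuousAt_const h2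
      have hc4 : ContinuousAt (fun t : ℝ => (1 + (t:ℂ) * (z₀ - 1)) ^ (-((1:ℂ)/2) - 1)) t :=
        hb2.cpow continuousAt_const h2
      apply ContinuousAt.continuousWithinAt
      exact (((continuousAt_const.mul hc1).mul
          Complex.continuous_ofReal.continuousAt).mul hc3).add
        (hc2.mul ((continuousAt_const.mul hc4).mul Complex.continuous_ofReal.continuousAt))
    · -- bound
      filter_upwards with t htI x hx
      rw [hIoc] at htI
      have htpos := htI.1
      have ht1 := htI.2
      have hxb := hball x hx
      have hb := (hre_bound x hx t htI).2
      have hm12 : ((1:ℂ)/2 - 1) = (((-(1/2) : ℝ)) : ℂ) := by push_cast; norm_num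
      have h12 : ((1:ℂ)/2) = (((1/2 : ℝ)) : ℂ) := by norm_num
      have hm32 : (-((1:ℂ)/2) - 1) = (((-(3/2) : ℝ)) : ℂ) := by push_cast; norm_num
      have habs1 : ‖1 + (t:ℂ) * (x - 1)‖ ^ (-(1/2):ℝ) ≤ c ^ (-(1/2):ℝ) :=
        Real.rpow_le_rpow_of_nonpos hcpos hb (by norm_num)
      have habs2 : ‖1 + (t:ℂ) * (x - 1)‖ ^ (-(3/2):ℝ) ≤ c ^ (-(3/2):ℝ) :=
        Real.rpow_le_rpow_of_nonpos hcpos hb (by norm_num)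
      have hsplit : (t * ‖x - 1‖) ^ (-(1/2):ℝ) * t
          = t ^ ((1/2):ℝ) * ‖x - 1‖ ^ (-(1/2):ℝ) := by
        have hts : t ^ (-(1/2):ℝ) * t = t ^ ((1/2):ℝ) := by
          rw [← Real.rpow_add_one htpos.ne' (-(1/2))]; norm_num
        rw [Real.mul_rpow htpos.le (norm_nonneg _), mul_right_comm, hts]
      have ht12 : t ^ ((1/2):ℝ) ≤ 1 := Real.rpow_le_one htpos.le ht1 (by norm_num)
      have hw12 : ‖x - 1‖ ^ (-(1/2):ℝ) ≤ r ^ (-(1/2):ℝ) :=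
        Real.rpow_le_rpow_of_nonpos hrpos hxb.2.1 (by norm_num)
      have hR12 : (t * ‖x - 1‖) ^ ((1/2):ℝ) ≤ R ^ ((1/2):ℝ) :=
        Real.rpow_le_rpow (by positivity)
          (by nlinarith [hxb.2.2.1, htpos, ht1, norm_nonneg (x-1)]) (by norm_num)
      calc ‖F' x t‖ ≤ ‖((1:ℂ)/2 * ((t:ℂ) * (x - 1)) ^ ((1:ℂ)/2 - 1) * (t:ℂ)) *
              (1 + (t:ℂ) * (x - 1)) ^ (-((1:ℂ)/2))‖ +
            ‖((t:ℂ) * (x - 1)) ^ ((1:ℂ)/2) *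
              (-((1:ℂ)/2) * (1 + (t:ℂ) * (x - 1)) ^ (-((1:ℂ)/2) - 1) * (t:ℂ))‖ :=
            norm_add_le _ _
        _ ≤ K := by
            simp only [norm_mul, norm_neg]
            rw [hm12, hm32, h12, ← Complex.ofReal_neg, hnorm x hx t htI, hnorm x hx t htI,
              Complex.norm_cpow_real, Complex.norm_cpow_real]
            have habs_half : ‖(((1/2:ℝ)):ℂ)‖ = 1/2 := by
              rw [Complex.norm_real]; norm_num
            rw [habs_half, Complex.norm_real, Real.norm_eq_abs, abs_of_pos htpos]
            rw [hK_def]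
            have hterm1 : 1/2 * (t * ‖x - 1‖) ^ (-(1/2):ℝ) * t *
                ‖1 + (t:ℂ) * (x - 1)‖ ^ (-(1/2):ℝ)
                ≤ 1/2 * 1 * r ^ (-(1/2) : ℝ) * c ^ (-(1/2) : ℝ) := by
              rw [show 1/2 * (t * ‖x - 1‖) ^ (-(1/2):ℝ) * t
                  = 1/2 * ((t * ‖x - 1‖) ^ (-(1/2):ℝ) * t) by ring, hsplit]
              have hA : t ^ ((1/2):ℝ) * ‖x - 1‖ ^ (-(1/2):ℝ)
                  ≤ 1 * r ^ (-(1/2):ℝ) :=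
                mul_le_mul ht12 hw12 (Real.rpow_nonneg (norm_nonneg _) _) zero_le_one
              have hApos : (0:ℝ) ≤ t ^ ((1/2):ℝ) * ‖x - 1‖ ^ (-(1/2):ℝ) :=
                mul_nonneg (Real.rpow_nonneg htpos.le _)
                  (Real.rpow_nonneg (norm_nonneg _) _)
              calc 1/2 * (t ^ ((1/2):ℝ) * ‖x - 1‖ ^ (-(1/2):ℝ)) *
                    ‖1 + (t:ℂ) * (x - 1)‖ ^ (-(1/2):ℝ)
                  ≤ 1/2 * (1 * r ^ (-(1/2):ℝ)) * (c ^ (-(1/2):ℝ)) :=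
                    mul_le_mul (mul_le_mul le_rfl hA hApos (by norm_num)) habs1
                      (Real.rpow_nonneg (norm_nonneg _) _) (by positivity)
                _ = 1/2 * 1 * r ^ (-(1/2) : ℝ) * c ^ (-(1/2) : ℝ) := by ring
            have hterm2 : (t * ‖x - 1‖) ^ ((1/2):ℝ) *
                (1/2 * ‖1 + (t:ℂ) * (x - 1)‖ ^ (-(3/2):ℝ) * t)
                ≤ R ^ ((1/2) : ℝ) * (1/2 * c ^ (-(3/2) : ℝ) * 1) := by
              have hYpos : (0:ℝ) ≤ ‖1 + (t:ℂ) * (x - 1)‖ ^ (-(3/2):ℝ) :=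
                Real.rpow_nonneg (norm_nonneg _) _
              have hinner : 1/2 * ‖1 + (t:ℂ) * (x - 1)‖ ^ (-(3/2):ℝ) * t
                  ≤ 1/2 * c ^ (-(3/2) : ℝ) * 1 :=
                mul_le_mul (mul_le_mul le_rfl habs2 hYpos (by norm_num)) ht1 htpos.le
                  (by positivity)
              exact mul_le_mul hR12 hinner
                (mul_nonneg (mul_nonneg (by norm_num) hYpos) htpos.le)
                (Real.rpow_nonneg hRpos.le _)
            linarith [hterm1, hterm2]
    · exact _root_.intervalIntegrable_const
    · -- differentiability
      filter_upwards with t htI x hx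
      rw [hIoc] at htI
      have h1 := (hslit x hx t htI).1
      have h2 := (hslit x hx t htI).2
      have hu : HasDerivAt (fun y : ℂ => (t:ℂ) * (y - 1)) (t:ℂ) x := by
        simpa using ((hasDerivAt_id x).sub_const 1).const_mul (t:ℂ)
      have hv : HasDerivAt (fun y : ℂ => 1 + (t:ℂ) * (y - 1)) (t:ℂ) x := hu.const_add 1
      exact (hu.cpow_const h1).mul (hv.cpow_const h2)
  -- conclude
  have hG : DifferentiableAt ℂ
      (fun z => ∫ t in (0:ℝ)..1,
        ((t:ℂ) * (z - 1)) ^ ((1:ℂ)/2) * (1 + (t:ℂ) * (z - 1)) ^ (-((1:ℂ)/2))) z₀ :=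
    key.differentiableAt
  have : DifferentiableAt ℂ (fun z : ℂ => 2 * (z - 1)) z₀ :=
    (differentiableAt_id.sub (differentiableAt_const 1)).const_mul 2
  exact this.mul hG
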